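/- Let A be an n_W × n_B matrix over F₂ and let S_B ⊆ F₂^{n_B}. Fix an error string e ∈ F₂^{n_B} on the B qubits of the bipartite graph state. Under the test T_B (measure W in Z basis getting z_W, measure B in X basis getting x_B), the quantity x_B + A^T z_W is independent of the random measurement outcomes z_W and equals e; hence the test outcome 'x_B + A^T z_W ∈ S_B' is deterministic given the error e. -/

import Mathlib

/-- Configurations of `nB + nW` qubits in the computational basis. -/
abbrev Cfg (nB nW : ℕ) := (Fin nB → ZMod 2) × (Fin nW → ZMod 2)

/-- The bipartite graph state with biadjacency matrix `A` over `F₂`. -/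
noncomputable def graphState {nB nW : ℕ} (A : Matrix (Fin nW) (Fin nB) (ZMod 2)) :
    Cfg nB nW → ℂ := fun s =>
  (-1 : ℂ) ^ ((∑ w, s.2 w * A.mulVec s.1 w : ZMod 2)).val
    / (Real.sqrt (2 ^ (nB + nW)) : ℂ)

/-- Pauli `Z` operators applied at the positions where `x ∈ F₂ⁿ` equals `1`. -/
def Zop {nB nW : ℕ} (x : Cfg nB nW) (ψ : Cfg nB nW → ℂ) : Cfg nB nW → ℂ :=
  fun s =>
    (-1 : ℂ) ^ ((∑ i, x.1 i * s.1 i) + (∑ w, x.2 w * s.2 w) : ZMod 2).val * ψ s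

/-- Amplitude of obtaining `X`-basis outcomes `xB'` on the `B` qubits and
`Z`-basis outcomes `zW` on the `W` qubits, when measuring the state `ψ`. -/
noncomputable def outcomeAmp {nB nW : ℕ} (ψ : Cfg nB nW → ℂ)
    (xB' : Fin nB → ZMod 2) (zW : Fin nW → ZMod 2) : ℂ :=
  ∑ sB : Fin nB → ZMod 2,
    (-1 : ℂ) ^ ((∑ i, xB' i * sB i : ZMod 2)).val * ψ (sB, zW)

noncomputable def χ (a : ZMod 2) : ℂ := (-1 : ℂ) ^ a.val

lemma chi_add (a b : ZMod 2) : χ (a + b) = χ a * χ b := by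
  unfold χ
  rw [ZMod.val_add, ← neg_one_pow_eq_pow_mod_two, pow_add]

lemma chi_zero : χ 0 = 1 := rfl

lemma chi_sum {ι : Type*} [DecidableEq ι] (s : Finset ι) (f : ι → ZMod 2) :
    χ (∑ i ∈ s, f i) = ∏ i ∈ s, χ (f i) := by
  induction s using Finset.induction with
  | empty => simp [chi_zero]
  | insert h ih => simp_all [chi_add]

/-- Under test `T_B`, on the state `Z^{(e,0)}|G⟩` the syndrome
`x_B + Aᵀ z_W` is deterministic: any outcome with nonzero amplitude
satisfies `x_B + Aᵀ z_W = e`. -/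
theorem test_TB_deterministic {nB nW : ℕ} (A : Matrix (Fin nW) (Fin nB) (ZMod 2))
    (e : Fin nB → ZMod 2) :
    ∀ (xB' : Fin nB → ZMod 2) (zW : Fin nW → ZMod 2),
      outcomeAmp (Zop (e, 0) (graphState A)) xB' zW ≠ 0 →
        xB' + A.transpose.mulVec zW = e := by
  intro xB' zW h
  set v : Fin nB → ZMod 2 := xB' + e + A.transpose.mulVec zW with hv
  set c : ℂ := (Real.sqrt (2 ^ (nB + nW)) : ℂ) with hc
  have key : outcomeAmp (Zop (e, 0) (graphState A)) xB' zW
      = (∑ sB : Fin nB → ZMod 2, ∏ i, χ (v i * sB i)) / c := by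
    rw [outcomeAmp, Finset.sum_div]
    apply Finset.sum_congr rfl
    intro sB _
    rw [← chi_sum]
    show χ _ * Zop (e, 0) (graphState A) (sB, zW) = _
    rw [Zop, graphState]
    show χ (∑ i, xB' i * sB i) * (χ _ * (χ _ / c)) = _
    have hring : ∀ x y z : ℂ, x * (y * (z / c)) = x * y * z / c := by intros; ring
    rw [hring, ← chi_add, ← chi_add]
    congr 2
    have h0 : (∑ w, (0 : Fin nW → ZMod 2) w * zW w) = 0 := by simp
    have h3 : ∑ i, A.transpose.mulVec zW i * sB i = ∑ w, zW w * A.mulVec sB w := by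
      simp only [Matrix.mulVec, dotProduct, Matrix.transpose_apply, Finset.sum_mul,
        Finset.mul_sum]
      rw [Finset.sum_comm]
      apply Finset.sum_congr rfl; intros; apply Finset.sum_congr rfl; intros; ring
    have hvi : ∀ i, v i * sB i = xB' i * sB i + e i * sB i + A.transpose.mulVec zW i * sB i := by
      intro i; simp [hv]; ring
    rw [h0, add_zero]
    calc ∑ i, xB' i * sB i + ∑ i, e i * sB i + ∑ w, zW w * A.mulVec sB w
        = ∑ i, xB' i * sB i + ∑ i, e i * sB i + ∑ i, A.transpose.mulVec zW i * sB i := by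
          rw [h3]
      _ = ∑ i, v i * sB i := by
          rw [← Finset.sum_add_distrib, ← Finset.sum_add_distrib]
          exact (Finset.sum_congr rfl fun i _ => (hvi i).symm)
  have hv0 : v = 0 := by
    by_contra hne
    apply h
    rw [key]
    obtain ⟨i, hi⟩ : ∃ i, v i ≠ 0 := by
      by_contra hall; push_neg at hall; exact hne (funext hall)
    have hi1 : v i = 1 := by
      have : ∀ a : ZMod 2, a ≠ 0 → a = 1 := by decide
      exact this _ hi
    have : ∑ sB : Fin nB → ZMod 2, ∏ j, χ (v j * sB j) = 0 := by
      rw [← Fintype.piFinset_univ,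
        ← Finset.prod_univ_sum (t := fun _ : Fin nB => (Finset.univ : Finset (ZMod 2)))
          (f := fun j s => χ (v j * s))]
      apply Finset.prod_eq_zero (Finset.mem_univ i)
      rw [hi1]
      show χ (1 * 0) + (χ (1 * 1) + 0) = 0
      norm_num [χ, ZMod.val_zero, ZMod.val_one]
    rw [this, zero_div]
  have := fun i => congrFun hv0 i
  funext i
  have key2 : ∀ a b c : ZMod 2, a + b + c = 0 → a + c = b := by decide
  exact key2 _ _ _ (this i)
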